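/- Let λ ≥ 2 be an integer and let p be a source with 2/(2^λ + 1) ≤ p(1) < 2^{−(λ−1)}. Then R*_opt(p) ≤ λ + lg p(1). -/
import Mathlib


/-- A source: a positive, monotonically nonincreasing probability mass function on `Fin n`. -/
def IsSource (n : ℕ) (p : Fin n → ℝ) : Prop :=
  (∀ i, 0 < p i) ∧ (∑ i, p i = 1) ∧ (∀ i j : Fin n, i ≤ j → p j ≤ p i)

/-- A codeword-length vector: positive integer lengths satisfying the Kraft inequality. -/
def IsCLV (n : ℕ) (l : Fin n → ℤ) : Prop :=
  (∀ i, 1 ≤ l i) ∧ (∑ i, (2:ℝ) ^ (-(l i)) ≤ 1)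

/-- Maximum pointwise redundancy `R*(l,p) = max_i (l(i) + lg p(i))`. -/
noncomputable def Rstar (n : ℕ) (l : Fin n → ℤ) (p : Fin n → ℝ) : ℝ :=
  ⨆ i : Fin n, ((l i : ℝ) + Real.logb 2 (p i))

/-- Minimum maximum pointwise redundancy over all codeword-length vectors. -/
noncomputable def RstarOpt (n : ℕ) (p : Fin n → ℝ) : ℝ :=
  sInf {r : ℝ | ∃ l : Fin n → ℤ, IsCLV n l ∧ Rstar n l p = r}

theorem stmt7 (n : ℕ) (hn : 2 ≤ n) (lam : ℕ) (hlam : 2 ≤ lam)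
    (p : Fin n → ℝ) (hp : IsSource n p)
    (h1 : 2 / ((2:ℝ) ^ lam + 1) ≤ p ⟨0, by omega⟩)
    (h2 : p ⟨0, by omega⟩ < (2:ℝ) ^ (-(lam:ℤ) + 1)) :
    RstarOpt n p ≤ (lam:ℝ) + Real.logb 2 (p ⟨0, by omega⟩) := by
  obtain ⟨hpos, hsum, hmono⟩ := hp
  have hne : Nonempty (Fin n) := ⟨⟨0, by omega⟩⟩
  set i0 : Fin n := ⟨0, by omega⟩ with hi0
  have hp0 : 0 < p i0 := hpos i0
  have hratio : ∀ i, 1 ≤ p i0 / p i := fun i =>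
    (one_le_div (hpos i)).2 (hmono i0 i (by simp [hi0, Fin.le_def]))
  have hlog0 : ∀ i, 0 ≤ Real.logb 2 (p i0 / p i) := fun i =>
    Real.logb_nonneg one_lt_two (hratio i)
  set l : Fin n → ℤ := fun i => ⌊(lam:ℝ) + Real.logb 2 (p i0 / p i)⌋ with hl
  have hlge : ∀ i, (lam:ℤ) ≤ l i := fun i =>
    Int.le_floor.2 (by push_cast; linarith [hlog0 i])
  have hlle : ∀ i, (l i : ℝ) ≤ (lam:ℝ) + Real.logb 2 (p i0 / p i) :=
    fun i => Int.floor_le _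
  have hlgt : ∀ i, (lam:ℝ) + Real.logb 2 (p i0 / p i) - 1 < (l i : ℝ) :=
    fun i => Int.sub_one_lt_floor _
  -- l i0 = lam
  have hl0 : l i0 = (lam:ℤ) := by
    simp [hl, div_self hp0.ne']
  -- convert zpow to rpow
  have hz : ∀ i, (2:ℝ) ^ (-(l i)) = (2:ℝ) ^ ((-(l i) : ℤ) : ℝ) := by
    intro i
    rw [Real.rpow_intCast]
  -- bound each term for i ≠ i0
  have hterm : ∀ i, (2:ℝ) ^ (-(l i)) ≤ 2 ^ ((1:ℝ) - lam) * (p i / p i0) := by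
    intro i
    rw [hz]
    have h1' : ((-(l i) : ℤ) : ℝ) ≤ (1:ℝ) - lam - Real.logb 2 (p i0 / p i) := by
      push_cast
      linarith [hlgt i]
    calc (2:ℝ) ^ ((-(l i) : ℤ) : ℝ)
        ≤ (2:ℝ) ^ ((1:ℝ) - lam - Real.logb 2 (p i0 / p i)) := by
          exact Real.rpow_le_rpow_of_exponent_le one_le_two h1'
      _ = 2 ^ ((1:ℝ) - lam) * (p i / p i0) := by
          rw [sub_eq_add_neg ((1:ℝ) - lam), Real.rpow_add two_pos,
            Real.rpow_neg (by norm_num), Real.rpow_logb two_pos (by norm_num)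
              (div_pos hp0 (hpos i)), inv_div]
  -- Kraft inequality
  have hA : (0:ℝ) < (2:ℝ) ^ lam := by positivity
  have hrp : (2:ℝ) ^ ((1:ℝ) - lam) = 2 / (2:ℝ) ^ lam := by
    rw [Real.rpow_sub two_pos, Real.rpow_one, Real.rpow_natCast]
  have hkraft : ∑ i, (2:ℝ) ^ (-(l i)) ≤ 1 := by
    have hmem : i0 ∈ (Finset.univ : Finset (Fin n)) := Finset.mem_univ _
    rw [← Finset.add_sum_erase _ _ hmem]
    have hsum' : ∑ i ∈ Finset.univ.erase i0, p i = 1 - p i0 := by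
      have := Finset.add_sum_erase Finset.univ p hmem
      linarith [this.symm ▸ hsum]
    have hb : ∑ i ∈ Finset.univ.erase i0, (2:ℝ) ^ (-(l i))
        ≤ ∑ i ∈ Finset.univ.erase i0, 2 ^ ((1:ℝ) - lam) * (p i / p i0) :=
      Finset.sum_le_sum fun i _ => hterm i
    have hc : ∑ i ∈ Finset.univ.erase i0, 2 ^ ((1:ℝ) - lam) * (p i / p i0)
        = 2 ^ ((1:ℝ) - lam) * ((1 - p i0) / p i0) := by
      rw [← Finset.mul_sum]
      congr 1
      rw [← hsum', Finset.sum_div]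
    have h00 : (2:ℝ) ^ (-(l i0)) = 1 / (2:ℝ) ^ lam := by
      rw [hl0, zpow_neg, zpow_natCast, one_div]
    rw [h00]
    have h1' : 2 / ((2:ℝ) ^ lam + 1) ≤ p i0 := h1
    have key : (2:ℝ) ≤ p i0 * ((2:ℝ) ^ lam + 1) := by
      rw [div_le_iff₀ (by positivity)] at h1'
      linarith
    have hle1 : p i0 ≤ 1 := by
      nlinarith [hsum' ▸ Finset.sum_nonneg (fun i _ => (hpos i).le),
        hsum'.symm]
    calc 1 / (2:ℝ) ^ lam + ∑ i ∈ Finset.univ.erase i0, (2:ℝ) ^ (-(l i))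
        ≤ 1 / (2:ℝ) ^ lam + 2 ^ ((1:ℝ) - lam) * ((1 - p i0) / p i0) := by
          rw [← hc]; linarith
      _ = 1 / (2:ℝ) ^ lam + 2 / (2:ℝ) ^ lam * ((1 - p i0) / p i0) := by rw [hrp]
      _ ≤ 1 := by
          have heq : 1 / (2:ℝ)^lam + 2/(2:ℝ)^lam * ((1 - p i0)/p i0)
              = (2 - p i0)/((2:ℝ)^lam * p i0) := by
            field_simp; ring
          rw [heq, div_le_one (by positivity)]
          nlinarith [key]
  have hCLV : IsCLV n l := ⟨fun i => le_trans (by omega : (1:ℤ) ≤ lam) (hlge i), hkraft⟩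
  have hRstar : Rstar n l p ≤ (lam:ℝ) + Real.logb 2 (p i0) := by
    apply ciSup_le
    intro i
    have h := hlle i
    rw [Real.logb_div hp0.ne' (hpos i).ne'] at h
    linarith
  have hbdd : BddBelow {r : ℝ | ∃ l : Fin n → ℤ, IsCLV n l ∧ Rstar n l p = r} := by
    refine ⟨1 + Real.logb 2 (p i0), ?_⟩
    rintro r ⟨l', hl', rfl⟩
    have h := le_ciSup (f := fun i => ((l' i : ℝ) + Real.logb 2 (p i)))
      (Set.Finite.bddAbove (Set.finite_range _)) i0
    have h1' : (1:ℝ) ≤ (l' i0 : ℝ) := by exact_mod_cast hl'.1 i0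
    calc 1 + Real.logb 2 (p i0) ≤ (l' i0:ℝ) + Real.logb 2 (p i0) := by linarith
      _ ≤ Rstar n l' p := h
  calc RstarOpt n p ≤ Rstar n l p := csInf_le hbdd ⟨l, hCLV, rfl⟩
    _ ≤ (lam:ℝ) + Real.logb 2 (p i0) := hRstar
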